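/- Orthogonal decomposition of the ambient space at a manifold point: if (x1, x2, x3) ∈ M with d > 0, then the span of N1 = X·U_1^0 and N2 = X·U_0^1 is exactly the orthogonal complement in (ℝ³)³ of the subspace T = {ξ : E1(ξ) = 0 and E2(ξ) = 0}; equivalently, every triple Z ∈ (ℝ³)³ decomposes uniquely as Z = ξ + η with ξ ∈ T, η ∈ span{N1, N2}, and ⟨ξ, η⟩ = 0. -/

import Mathlib

open RealInnerProductSpace

/-- The space of triples of vectors of `ℝ³`, with the inner product
`⟨ξ, η⟩ = ⟪ξ1, η1⟫ + ⟪ξ2, η2⟫ + ⟪ξ3, η3⟫`. -/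
abbrev TripleSpace : Type :=
  PiLp 2 (fun _ : Fin 3 => EuclideanSpace ℝ (Fin 3))

/-- Build a triple from its three components. -/
noncomputable def mkTriple (a b c : EuclideanSpace ℝ (Fin 3)) : TripleSpace :=
  (WithLp.equiv 2 _).symm ![a, b, c]

/-- The triple `X·U_α^β = (η1, η2, η3)` from the paper. -/
noncomputable def XU (x1 x2 x3 : EuclideanSpace ℝ (Fin 3)) (α β : ℝ) : TripleSpace :=
  mkTriple ((α + β) • (x2 - x3))
    ((α + β) • x1 - (2 * α) • x2 + (α - β) • x3)
    (-((α + β) • x1) + (α - β) • x2 + (2 * β) • x3)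

lemma inner_XU10 (x1 x2 x3 : EuclideanSpace ℝ (Fin 3)) (ξ : TripleSpace) :
    ⟪XU x1 x2 x3 1 0, ξ⟫ = ⟪ξ 0 - ξ 1, x2 - x3⟫ + ⟪x1 - x2, ξ 1 - ξ 2⟫ := by
  simp [XU, mkTriple, PiLp.inner_apply, RCLike.inner_apply, Fin.sum_univ_three,
    PiLp.toLp_apply, PiLp.sub_apply, PiLp.add_apply, PiLp.smul_apply,
    PiLp.neg_apply, smul_eq_mul]
  ring

lemma inner_XU01 (x1 x2 x3 : EuclideanSpace ℝ (Fin 3)) (ξ : TripleSpace) :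
    ⟪XU x1 x2 x3 0 1, ξ⟫ = ⟪ξ 0 - ξ 2, x2 - x3⟫ + ⟪x1 - x3, ξ 1 - ξ 2⟫ := by
  simp [XU, mkTriple, PiLp.inner_apply, RCLike.inner_apply, Fin.sum_univ_three,
    PiLp.toLp_apply, PiLp.sub_apply, PiLp.add_apply, PiLp.smul_apply,
    PiLp.neg_apply, smul_eq_mul]
  ring

/-- Orthogonal decomposition of the ambient space at a manifold point:
if `(x1, x2, x3) ∈ M` with `d > 0`, then the span of `N1 = X·U_1^0` and `N2 = X·U_0^1`
is exactly the orthogonal complement of the tangent subspace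
`T = {ξ : E1(ξ) = 0 ∧ E2(ξ) = 0}`; equivalently, every triple `Z` decomposes uniquely
as `Z = ξ + η` with `ξ ∈ T`, `η ∈ span{N1, N2}`, and `⟨ξ, η⟩ = 0`. -/
theorem orthogonal_decomposition (d : ℝ) (hd : 0 < d)
    (x1 x2 x3 : EuclideanSpace ℝ (Fin 3))
    (h1 : ⟪x1 - x2, x2 - x3⟫ = -d ^ 2 / 2)
    (h2 : ⟪x1 - x3, x2 - x3⟫ = d ^ 2 / 2) :
    ∃ T : Submodule ℝ TripleSpace,
      (∀ ξ : TripleSpace,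
        ξ ∈ T ↔
          ⟪ξ 0 - ξ 1, x2 - x3⟫ + ⟪x1 - x2, ξ 1 - ξ 2⟫ = 0 ∧
          ⟪ξ 0 - ξ 2, x2 - x3⟫ + ⟪x1 - x3, ξ 1 - ξ 2⟫ = 0) ∧
      Submodule.span ℝ {XU x1 x2 x3 1 0, XU x1 x2 x3 0 1} = Tᗮ ∧
      (∀ Z : TripleSpace, ∃! p : TripleSpace × TripleSpace,
        p.1 ∈ T ∧ p.2 ∈ Submodule.span ℝ {XU x1 x2 x3 1 0, XU x1 x2 x3 0 1} ∧
        ⟪p.1, p.2⟫ = 0 ∧ Z = p.1 + p.2) := by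
  set N1 := XU x1 x2 x3 1 0
  set N2 := XU x1 x2 x3 0 1
  set K : Submodule ℝ TripleSpace := Submodule.span ℝ {N1, N2} with hK
  refine ⟨Kᗮ, ?_, ?_, ?_⟩
  · intro ξ
    rw [← inner_XU10 x1 x2 x3 ξ, ← inner_XU01 x1 x2 x3 ξ, Submodule.mem_orthogonal]
    constructor
    · intro h
      exact ⟨h N1 (Submodule.subset_span (by simp)),
             h N2 (Submodule.subset_span (by simp))⟩
    · rintro ⟨hA, hB⟩ u hu
      induction hu using Submodule.span_induction with
      | mem y hy =>
        rcases hy with hy | hy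
        · rw [hy]; exact hA
        · rw [Set.mem_singleton_iff.mp hy]; exact hB
      | zero => simp
      | add y z _ _ hy hz => rw [inner_add_left, hy, hz, add_zero]
      | smul a y _ hy => rw [real_inner_smul_left, hy, mul_zero]
  · exact (Submodule.orthogonal_orthogonal K).symm
  · intro Z
    obtain ⟨y, hy, z, hz, hyz⟩ := K.exists_add_mem_mem_orthogonal Z
    refine ⟨(z, y), ⟨hz, hy, ?_, by rw [hyz]; abel⟩, ?_⟩
    · rw [real_inner_comm]; exact (Submodule.mem_orthogonal K z).mp hz y hy
    · rintro ⟨z', y'⟩ ⟨hz', hy', -, hZ'⟩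
      have heq : z' - z = y - y' := by
        rw [sub_eq_sub_iff_add_eq_add]
        exact hZ'.symm.trans hyz
      have hmem : z' - z ∈ K ⊓ Kᗮ := ⟨heq ▸ Submodule.sub_mem _ hy hy', Submodule.sub_mem _ hz' hz⟩
      have hz0 : z' - z = 0 := by
        rw [Submodule.inf_orthogonal_eq_bot] at hmem
        simpa using hmem
      have hzz : z' = z := by
        have := sub_eq_zero.mp hz0; exact this
      have hyy : y' = y := by
        have : y - y' = 0 := heq ▸ hz0
        exact (sub_eq_zero.mp this).symm
      simp [Prod.ext_iff, hzz, hyy]
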